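/- Let K be a field of characteristic 2, m ≤ n positive integers, and A ∈ M_{m×n}(K) a matrix of rank m such that the all-ones vector 𝟏 ∈ K^n does not belong to the row space of A. Then the map Φ_A ⊕ α : M_{m×n}(K) → Sym_m(K) ⊕ K^m given by N ↦ (AN^t + NA^t + Diag(AN^t), 𝟏N^t) is surjective. -/

import Mathlib

open scoped BigOperators

namespace Paper

/-- Self-orthogonality of a set of vectors w.r.t. the standard inner product. -/
def sorth {m : ℕ} {ι : Type} [Fintype ι] (S : Set (ι → ZMod m)) : Prop :=
  ∀ x ∈ S, ∀ y ∈ S, ∑ i, x i * y i = 0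

/-- The dual (as a set) of a set of vectors w.r.t. the standard inner product. -/
def dualSet {m : ℕ} {ι : Type} [Fintype ι] (S : Set (ι → ZMod m)) : Set (ι → ZMod m) :=
  {x | ∀ y ∈ S, ∑ i, x i * y i = 0}

/-- A set of vectors is doubly even if every element has Hamming weight divisible by 4. -/
def doublyEven {m : ℕ} {ι : Type} [Fintype ι] (S : Set (ι → ZMod m)) : Prop :=
  ∀ x ∈ S, 4 ∣ (Finset.univ.filter fun i => x i ≠ 0).card

/-- Coordinatewise reduction map `(Z_{p^2})^ι → (Z_p)^ι`. -/
def res (p : ℕ) [Fact p.Prime] {ι : Type} (v : ι → ZMod (p ^ 2)) : ι → ZMod p :=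
  fun i => ZMod.castHom (dvd_pow_self p (by norm_num)) (ZMod p) (v i)

/-- The injection `(Z_p)^ι → (Z_{p^2})^ι` induced by `Z_p ≅ pZ_{p^2} ⊆ Z_{p^2}`. -/
def iot (p : ℕ) {ι : Type} (v : ι → ZMod p) : ι → ZMod (p ^ 2) :=
  fun i => (p : ZMod (p ^ 2)) * (ZMod.cast (v i))

/-- Coordinatewise reduction map `(Z_4)^ι → (Z_2)^ι`. -/
def res4 {ι : Type} (v : ι → ZMod 4) : ι → ZMod 2 :=
  fun i => ZMod.castHom (by norm_num : (2:ℕ) ∣ 4) (ZMod 2) (v i)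

/-- The injection `(Z_2)^ι → (Z_4)^ι`. -/
def iot4 {ι : Type} (v : ι → ZMod 2) : ι → ZMod 4 :=
  fun i => (2 : ZMod 4) * (ZMod.cast (v i))

/-- Euclidean weight on `Z_4`. -/
def ewt (x : ZMod 4) : ℕ := if x = 0 then 0 else if x = 2 then 4 else 1

/-- A quaternary code is even if every codeword has Euclidean weight divisible by 8. -/
def evenCode {ι : Type} [Fintype ι] (S : Set (ι → ZMod 4)) : Prop :=
  ∀ x ∈ S, 8 ∣ ∑ i, ewt (x i)

/-- The code over `Z_q` generated by the rows of an integer matrix. -/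
def intRowSpan (q : ℕ) {κ ι : Type} (G : Matrix κ ι ℤ) :
    Submodule (ZMod q) (ι → ZMod q) :=
  Submodule.span (ZMod q) (Set.range fun i => fun c => ((G i c : ℤ) : ZMod q))

/-- The Gaussian binomial coefficient `[n choose k]_p`. -/
def gauss (p n k : ℕ) : ℚ :=
  ∏ i ∈ Finset.range k, ((p : ℚ) ^ n - (p : ℚ) ^ i) / ((p : ℚ) ^ k - (p : ℚ) ^ i)

/-- in characteristic `2`, if `A` has rank `m` and the all-ones vector is not in
the row space of `A`, then `N ↦ (ANᵗ + NAᵗ + Diag(ANᵗ), 𝟏Nᵗ)` is surjective onto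
`Sym_m(K) ⊕ K^m`. -/
theorem stmt3 (K : Type) [Field K] (hchar : ringChar K = 2) (m n : ℕ) (hm : 0 < m) (hmn : m ≤ n)
    (A : Matrix (Fin m) (Fin n) K) (hA : A.rank = m)
    (hone : (fun _ => (1 : K)) ∉ Submodule.span K (Set.range fun i => A i)) :
    ∀ S : Matrix (Fin m) (Fin m) K, S.IsSymm → ∀ w : Fin m → K,
      ∃ N : Matrix (Fin m) (Fin n) K,
        A * N.transpose + N * A.transpose + Matrix.diagonal (fun i => (A * N.transpose) i i) = S ∧
        (fun i => ∑ j, N i j) = w := by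
  classical
  haveI : CharP K 2 := hchar ▸ ringChar.charP K
  intro S hS w
  -- rows of A are linearly independent
  have hAind : LinearIndependent K (fun i => A i) := by
    rw [linearIndependent_iff_card_eq_finrank_span, Set.finrank]
    exact ((A.rank_eq_finrank_span_row.symm.trans hA).trans (Fintype.card_fin m).symm).symm
  -- extended matrix
  set B : Matrix (Option (Fin m)) (Fin n) K :=
    fun o => Option.casesOn' o (fun _ => (1 : K)) (fun i => A i) with hB
  have hBind : LinearIndependent K B := hAind.option hone
  have hBrank : B.rank = Fintype.card (Option (Fin m)) := hBind.rank_matrix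
  have hsurj : Function.Surjective B.mulVecLin := by
    rw [← LinearMap.range_eq_top]
    apply Submodule.eq_top_of_finrank_eq
    rw [← Matrix.rank, hBrank, Module.finrank_fintype_fun_eq_card]
  -- target
  set T : Matrix (Fin m) (Fin m) K := fun i j => if j ≤ i then S i j else 0 with hT
  have hN : ∀ k : Fin m, ∃ v : Fin n → K,
      B.mulVecLin v = fun o => Option.casesOn' o (w k) (fun i => T i k) :=
    fun k => hsurj _
  choose N hNspec using hN
  refine ⟨fun k j => N k j, ?_, ?_⟩
  · have hANt : ∀ i k, (A * (Matrix.of fun k j => N k j).transpose) i k = T i k := by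
      intro i k
      have := congrFun (hNspec k) (some i)
      rw [Matrix.mulVecLin_apply] at this
      simpa [Matrix.mulVecLin_apply, Matrix.mulVec, dotProduct, hB,
        Matrix.mul_apply] using this
    ext i k
    simp only [Matrix.add_apply, Matrix.diagonal_apply, Matrix.mul_apply,
      Matrix.transpose_apply]
    show (∑ j, A i j * N k j) + (∑ j, N i j * A k j) +
      (if i = k then ∑ j, A i j * N i j else 0) = S i k
    have h1 : ∑ j, A i j * N k j = T i k := by
      simpa [Matrix.mul_apply, Matrix.transpose_apply] using hANt i k
    have h2 : ∑ j, N i j * A k j = T k i := by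
      have := hANt k i
      simpa [Matrix.mul_apply, Matrix.transpose_apply, mul_comm] using this
    have h3 : ∀ i : Fin m, ∑ j, A i j * N i j = T i i := fun i => by
      simpa [Matrix.mul_apply, Matrix.transpose_apply] using hANt i i
    rw [h1, h2]
    by_cases hik : i = k
    · subst hik
      simp [h3 i, hT]
      have : (S i i : K) + S i i = 0 := by
        have : (2 : K) = 0 := by exact_mod_cast CharP.cast_eq_zero K 2
        rw [← two_mul, this, zero_mul]
      linear_combination this
    · simp only [if_neg hik]
      rcases lt_or_gt_of_ne hik with h | h
      · simp [hT, h.le, not_le.mpr h, hS.apply]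
      · simp [hT, h.le, not_le.mpr h, hS.apply]
  · funext k
    have := congrFun (hNspec k) none
    rw [Matrix.mulVecLin_apply] at this
    simpa [Matrix.mulVecLin_apply, Matrix.mulVec, dotProduct, hB] using this

end Paper
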